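/- If ∫₀^∞ s κ₊(s) ds ≤ 1 and ∫₀^∞ s κ₋(s) ds < ∞, where κ₊ = max{κ,0}, κ₋ = max{-κ,0}, and f solves f'' + κ f = 0, f(0)=0, f'(0)=1, then there exist constants 0 < μ₀ ≤ μ₁ < ∞ such that μ₀ ≤ f'(ρ) ≤ μ₁ and μ₀ ρ ≤ f(ρ) ≤ μ₁ ρ for all ρ ≥ 0. -/

import Mathlib

open MeasureTheory intervalIntegral Set

private lemma helper_pos {g : ℝ → ℝ} (hg : Continuous g) {a b c : ℝ} (hab : a < b)
    (hca : a ≤ c) (hcb : c ≤ b) (hnn : ∀ x ∈ Set.Icc a b, 0 ≤ g x) (hc : 0 < g c) :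
    0 < ∫ x in a..b, g x := by
  obtain ⟨δ, hδ, hball⟩ := Metric.continuousAt_iff.mp hg.continuousAt (g c / 2) (by linarith)
  set c₁ := max a (c - δ/2) with hc₁
  set c₂ := min b (c + δ/2) with hc₂
  have h1 : a ≤ c₁ := le_max_left _ _
  have h2 : c₂ ≤ b := min_le_left _ _
  have h12 : c₁ < c₂ := by
    apply max_lt <;> [skip; skip] <;> apply lt_min <;> linarith
  have hsub : ∀ x ∈ Set.Icc c₁ c₂, g c / 2 ≤ g x := by
    intro x hx
    have hx1 : c - δ/2 ≤ x := le_trans (le_max_right _ _) hx.1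
    have hx2 : x ≤ c + δ/2 := le_trans hx.2 (min_le_right _ _)
    have : dist x c < δ := by rw [Real.dist_eq]; rw [abs_lt]; constructor <;> linarith
    have := hball this
    rw [Real.dist_eq, abs_lt] at this
    linarith [this.1]
  have hint : ∀ u v : ℝ, IntervalIntegrable g volume u v := fun u v => hg.intervalIntegrable u v
  have e1 : (∫ x in a..c₁, g x) + ∫ x in c₁..b, g x = ∫ x in a..b, g x :=
    integral_add_adjacent_intervals (hint _ _) (hint _ _)
  have e2 : (∫ x in c₁..c₂, g x) + ∫ x in c₂..b, g x = ∫ x in c₁..b, g x :=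
    integral_add_adjacent_intervals (hint _ _) (hint _ _)
  have n1 : 0 ≤ ∫ x in a..c₁, g x := by
    apply intervalIntegral.integral_nonneg h1
    intro x hx; exact hnn x ⟨hx.1, le_trans hx.2 (by linarith)⟩
  have n3 : 0 ≤ ∫ x in c₂..b, g x := by
    apply intervalIntegral.integral_nonneg h2
    intro x hx; exact hnn x ⟨le_trans (by linarith) hx.1, hx.2⟩
  have n2 : (c₂ - c₁) * g c / 2 ≤ ∫ x in c₁..c₂, g x := by
    have := intervalIntegral.integral_mono_on (f := fun _ => g c / 2) (g := g) h12.le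
      (intervalIntegrable_const) (hint _ _) hsub
    simpa using this
  nlinarith [mul_pos (sub_pos.mpr h12) (half_pos hc)]

/-- if `∫₀^∞ s κ₊(s) ds ≤ 1` and `∫₀^∞ s κ₋(s) ds < ∞`, and `f` solves
`f'' + κ f = 0`, `f 0 = 0`, `f' 0 = 1`, then there exist `0 < μ₀ ≤ μ₁ < ∞` with
`μ₀ ≤ f'(ρ) ≤ μ₁` and `μ₀ ρ ≤ f(ρ) ≤ μ₁ ρ` for all `ρ ≥ 0`. -/
theorem stmt_6 (κ f : ℝ → ℝ) (hκ : Continuous κ) (hf : ContDiff ℝ 2 f)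
    (hode : ∀ t > (0:ℝ), deriv (deriv f) t + κ t * f t = 0)
    (hf0 : f 0 = 0) (hf'0 : deriv f 0 = 1)
    (hintP : MeasureTheory.IntegrableOn (fun s => s * max (κ s) 0) (Set.Ioi 0))
    (hmuP : (∫ s in Set.Ioi (0:ℝ), s * max (κ s) 0) ≤ 1)
    (hintM : MeasureTheory.IntegrableOn (fun s => s * max (-κ s) 0) (Set.Ioi 0)) :
    ∃ μ₀ μ₁ : ℝ, 0 < μ₀ ∧ μ₀ ≤ μ₁ ∧
      ∀ ρ ≥ (0:ℝ), (μ₀ ≤ deriv f ρ ∧ deriv f ρ ≤ μ₁) ∧ (μ₀ * ρ ≤ f ρ ∧ f ρ ≤ μ₁ * ρ) := by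
  have hf1 : ContDiff ℝ 1 (deriv f) := by
    have := (contDiff_succ_iff_deriv (n := 1)).mp (by exact_mod_cast hf)
    exact this.2.2
  have hdiff : Differentiable ℝ f := hf.differentiable (by norm_num)
  have hdiff' : Differentiable ℝ (deriv f) := hf1.differentiable one_ne_zero
  have hcf : Continuous f := hdiff.continuous
  have hcf' : Continuous (deriv f) := hdiff'.continuous
  have hcf'' : Continuous (deriv (deriv f)) := hf1.continuous_deriv le_rfl
  -- ODE holds also at 0 by continuity
  have hodeAll : ∀ t ≥ (0:ℝ), deriv (deriv f) t = -(κ t * f t) := by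
    intro t ht
    rcases eq_or_lt_of_le ht with h | h
    · have hg : Continuous fun t => deriv (deriv f) t + κ t * f t :=
        hcf''.add (hκ.mul hcf)
      have h1 : Filter.Tendsto (fun t => deriv (deriv f) t + κ t * f t) (nhdsWithin 0 (Ioi 0))
          (nhds (deriv (deriv f) 0 + κ 0 * f 0)) :=
        (hg.tendsto 0).mono_left nhdsWithin_le_nhds
      have h2 : Filter.Tendsto (fun t => deriv (deriv f) t + κ t * f t) (nhdsWithin 0 (Ioi 0))
          (nhds 0) := by
        apply Filter.Tendsto.congr' _ tendsto_const_nhds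
        filter_upwards [self_mem_nhdsWithin] with x hx
        exact (hode x hx).symm
      have := tendsto_nhds_unique h1 h2
      rw [← h]; linarith [this]
    · linarith [hode t h]
  set kp : ℝ → ℝ := fun s => max (κ s) 0 with hkp
  set km : ℝ → ℝ := fun s => max (-κ s) 0 with hkm
  have hckp : Continuous kp := hκ.max continuous_const
  have hckm : Continuous km := hκ.neg.max continuous_const
  have hkpnn : ∀ s, 0 ≤ kp s := fun s => le_max_right _ _
  have hkmnn : ∀ s, 0 ≤ km s := fun s => le_max_right _ _
  have hk : ∀ s, kp s - km s = κ s := by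
    intro s; simp only [hkp, hkm]
    rcases le_total (κ s) 0 with h | h
    · rw [max_eq_right h, max_eq_left (by linarith)]; ring
    · rw [max_eq_left h, max_eq_right (by linarith)]; ring
  set P : ℝ → ℝ := fun t => ∫ s in (0:ℝ)..t, kp s * f s with hPdef
  set N : ℝ → ℝ := fun t => ∫ s in (0:ℝ)..t, km s * f s with hNdef
  set R : ℝ → ℝ := fun t => ∫ u in (0:ℝ)..t, P u with hRdef
  have hcPf : Continuous fun s => kp s * f s := hckp.mul hcf
  have hcNf : Continuous fun s => km s * f s := hckm.mul hcf
  have hPd : ∀ t, HasDerivAt P (kp t * f t) t := fun t =>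
    (hcPf.integral_hasStrictDerivAt 0 t).hasDerivAt
  have hNd : ∀ t, HasDerivAt N (km t * f t) t := fun t =>
    (hcNf.integral_hasStrictDerivAt 0 t).hasDerivAt
  have hcP : Continuous P :=
    continuous_iff_continuousAt.mpr fun t => (hPd t).continuousAt
  have hcN : Continuous N :=
    continuous_iff_continuousAt.mpr fun t => (hNd t).continuousAt
  have hcR : Continuous R :=
    continuous_iff_continuousAt.mpr fun t =>
      ((hcP.integral_hasStrictDerivAt 0 t).hasDerivAt).continuousAt
  have hcQf : Continuous fun s => kp s * R s := hckp.mul hcR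
  set Q : ℝ → ℝ := fun t => ∫ s in (0:ℝ)..t, kp s * R s with hQdef
  -- FTC identities
  have hd1 : ∀ T, 0 ≤ T → deriv f T = 1 - P T + N T := by
    intro T hT
    have h1 : ∫ y in (0:ℝ)..T, deriv (deriv f) y = deriv f T - deriv f 0 :=
      integral_deriv_eq_sub (fun x _ => hdiff' x) (hcf''.intervalIntegrable 0 T)
    have h2 : ∫ y in (0:ℝ)..T, deriv (deriv f) y
        = ∫ y in (0:ℝ)..T, (km y * f y - kp y * f y) := by
      apply intervalIntegral.integral_congr
      intro y hy
      rw [uIcc_of_le hT] at hy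
      show deriv (deriv f) y = km y * f y - kp y * f y
      rw [hodeAll y hy.1, ← hk y]; ring
    have h3 : ∫ y in (0:ℝ)..T, (km y * f y - kp y * f y) = N T - P T := by
      rw [intervalIntegral.integral_sub (hcNf.intervalIntegrable 0 T)
        (hcPf.intervalIntegrable 0 T)]
    rw [hf'0] at h1
    rw [h2, h3] at h1
    linarith
  have hfInt : ∀ T, f T = ∫ u in (0:ℝ)..T, deriv f u := by
    intro T
    rw [integral_deriv_eq_sub (fun x _ => hdiff x) (hcf'.intervalIntegrable 0 T),
      hf0, sub_zero]
  -- the truncated integral of s * kp s is at most 1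
  have hA1 : ∀ T, 0 ≤ T → (∫ s in (0:ℝ)..T, s * kp s) ≤ 1 := by
    intro T hT
    have h1 : (∫ s in (0:ℝ)..T, s * kp s) = ∫ s in Ioc (0:ℝ) T, s * kp s :=
      intervalIntegral.integral_of_le hT
    have h2 : (∫ s in Ioc (0:ℝ) T, s * kp s) ≤ ∫ s in Ioi (0:ℝ), s * kp s := by
      apply setIntegral_mono_set hintP
      · filter_upwards [self_mem_ae_restrict measurableSet_Ioi] with x hx
        exact mul_nonneg (le_of_lt hx) (hkpnn x)
      · exact HasSubset.Subset.eventuallyLE Ioc_subset_Ioi_self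
    linarith [hmuP]
  -- KEY inequality
  have hKEY : ∀ T, 0 < T → (∀ t ∈ Icc (0:ℝ) T, 0 ≤ f t) →
      (1 + N T) * (1 - ∫ s in (0:ℝ)..T, s * kp s) + Q T ≤ deriv f T ∧
      0 ≤ N T ∧ 0 ≤ Q T ∧ P T ≤ (1 + N T) * (∫ s in (0:ℝ)..T, s * kp s) - Q T := by
    intro T hT hfpos
    have hPnn : ∀ u ∈ Icc (0:ℝ) T, 0 ≤ P u := by
      intro u hu
      apply intervalIntegral.integral_nonneg hu.1
      intro x hx
      exact mul_nonneg (hkpnn x) (hfpos x ⟨hx.1, le_trans hx.2 hu.2⟩)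
    have hNnn : ∀ u ∈ Icc (0:ℝ) T, 0 ≤ N u := by
      intro u hu
      apply intervalIntegral.integral_nonneg hu.1
      intro x hx
      exact mul_nonneg (hkmnn x) (hfpos x ⟨hx.1, le_trans hx.2 hu.2⟩)
    have hNmono : ∀ u ∈ Icc (0:ℝ) T, N u ≤ N T := by
      intro u hu
      have e : N u + (∫ s in u..T, km s * f s) = N T :=
        integral_add_adjacent_intervals (hcNf.intervalIntegrable _ _)
          (hcNf.intervalIntegrable _ _)
      have : 0 ≤ ∫ s in u..T, km s * f s := by
        apply intervalIntegral.integral_nonneg hu.2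
        intro x hx
        exact mul_nonneg (hkmnn x) (hfpos x ⟨le_trans hu.1 hx.1, hx.2⟩)
      linarith
    have hfb : ∀ s ∈ Icc (0:ℝ) T, f s ≤ s * (1 + N T) - R s := by
      intro s hs
      have hmono : (∫ u in (0:ℝ)..s, deriv f u) ≤ ∫ u in (0:ℝ)..s, (1 + N T - P u) := by
        apply intervalIntegral.integral_mono_on hs.1 (hcf'.intervalIntegrable _ _)
          ((continuous_const.sub hcP).intervalIntegrable _ _)
        intro u hu
        have hu' : u ∈ Icc (0:ℝ) T := ⟨hu.1, le_trans hu.2 hs.2⟩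
        rw [hd1 u hu.1]
        have := hNmono u hu'
        have := hPnn u hu'
        show 1 - P u + N u ≤ 1 + N T - P u
        linarith
      have e : (∫ u in (0:ℝ)..s, (1 + N T - P u)) = s * (1 + N T) - R s := by
        rw [intervalIntegral.integral_sub (intervalIntegrable_const)
          (hcP.intervalIntegrable _ _), intervalIntegral.integral_const]
        simp [hRdef]
      rw [hfInt s]
      linarith
    have hQnn : 0 ≤ Q T := by
      apply intervalIntegral.integral_nonneg hT.le
      intro x hx
      apply mul_nonneg (hkpnn x)
      apply intervalIntegral.integral_nonneg hx.1
      intro u hu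
      exact hPnn u ⟨hu.1, le_trans hu.2 hx.2⟩
    have hPT : P T ≤ (1 + N T) * (∫ s in (0:ℝ)..T, s * kp s) - Q T := by
      have h1 : P T ≤ ∫ s in (0:ℝ)..T, kp s * (s * (1 + N T) - R s) := by
        apply intervalIntegral.integral_mono_on hT.le (hcPf.intervalIntegrable _ _)
          ((hckp.mul ((continuous_id.mul continuous_const).sub hcR)).intervalIntegrable _ _)
        intro s hs
        exact mul_le_mul_of_nonneg_left (hfb s hs) (hkpnn s)
      have h2 : (∫ s in (0:ℝ)..T, kp s * (s * (1 + N T) - R s))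
          = (1 + N T) * (∫ s in (0:ℝ)..T, s * kp s) - Q T := by
        have e : ∀ s, kp s * (s * (1 + N T) - R s)
            = (1 + N T) * (s * kp s) - kp s * R s := by intro s; ring
        have i1 : IntervalIntegrable (fun s => (1 + N T) * (s * kp s)) volume 0 T :=
          (continuous_const.mul (continuous_id.mul hckp)).intervalIntegrable _ _
        have i2 : IntervalIntegrable (fun s => kp s * R s) volume 0 T :=
          hcQf.intervalIntegrable _ _
        rw [intervalIntegral.integral_congr (fun s _ => e s),
          intervalIntegral.integral_sub i1 i2, intervalIntegral.integral_const_mul]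
      linarith
    have hNT : 0 ≤ N T := hNnn T ⟨hT.le, le_rfl⟩
    refine ⟨?_, hNT, hQnn, hPT⟩
    rw [hd1 T hT.le]
    nlinarith
  -- if P T > 0 then Q T > 0
  have hQposlem : ∀ T, 0 < T → (∀ t ∈ Icc (0:ℝ) T, 0 ≤ f t) → 0 < P T → 0 < Q T := by
    intro T hT hfpos hPT
    have hPnn : ∀ u ∈ Icc (0:ℝ) T, 0 ≤ P u := by
      intro u hu
      apply intervalIntegral.integral_nonneg hu.1
      intro x hx
      exact mul_nonneg (hkpnn x) (hfpos x ⟨hx.1, le_trans hx.2 hu.2⟩)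
    set U := {u | u ∈ Icc (0:ℝ) T ∧ 0 < P u} with hUdef
    have hUne : U.Nonempty := ⟨T, ⟨hT.le, le_rfl⟩, hPT⟩
    have hUbdd : BddBelow U := ⟨0, fun x hx => hx.1.1⟩
    set u' := sInf U with hu'def
    have hu'0 : 0 ≤ u' := le_csInf hUne fun x hx => hx.1.1
    have hu'T : u' ≤ T := csInf_le hUbdd ⟨⟨hT.le, le_rfl⟩, hPT⟩
    have hzero : ∀ u, 0 ≤ u → u < u' → P u = 0 := by
      intro u hu0 huu
      have hnotU : u ∉ U := notMem_of_lt_csInf huu hUbdd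
      have huT : u ≤ T := le_trans huu.le hu'T
      have : ¬ 0 < P u := fun h => hnotU ⟨⟨hu0, huT⟩, h⟩
      linarith [hPnn u ⟨hu0, huT⟩, not_lt.mp this]
    have hPu' : P u' = 0 := by
      rcases eq_or_lt_of_le hu'0 with h0 | h0
      · rw [← h0]; simp [hPdef]
      · have hlt : ∀ ε, 0 < ε → P u' < ε := by
          intro ε hε
          obtain ⟨δ, hδ, hb⟩ := Metric.continuousAt_iff.mp hcP.continuousAt ε hε
          set x := u' - min δ u' / 2 with hxdef
          have hmin : 0 < min δ u' := lt_min hδ h0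
          have hx0 : 0 ≤ x := by
            have : min δ u' ≤ u' := min_le_right _ _
            simp only [hxdef]; linarith
          have hxlt : x < u' := by simp only [hxdef]; linarith
          have hdist : dist x u' < δ := by
            rw [Real.dist_eq, abs_lt]
            have : min δ u' ≤ δ := min_le_left _ _
            constructor <;> simp only [hxdef] <;> linarith
          have hPx : P x = 0 := hzero x hx0 hxlt
          have := hb hdist
          rw [Real.dist_eq, hPx, abs_lt] at this
          linarith [this.2]
        have h1 : ¬ 0 < P u' := fun h => lt_irrefl _ (hlt (P u') h)
        linarith [hPnn u' ⟨hu'0, hu'T⟩, not_lt.mp h1]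
    have hu'T' : u' < T := by
      rcases eq_or_lt_of_le hu'T with h | h
      · rw [h] at hPu'; linarith
      · exact h
    have hRpos : ∀ s, u' < s → s ≤ T → 0 < R s := by
      intro s hs hsT
      obtain ⟨v, hvU, hvs⟩ := (csInf_lt_iff hUbdd hUne).mp hs
      have hv0 : 0 ≤ v := hvU.1.1
      exact helper_pos hcP (lt_of_le_of_lt hv0 hvs) hv0 hvs.le
        (fun x hx => hPnn x ⟨hx.1, le_trans hx.2 hsT⟩) hvU.2
    by_cases hex : ∃ s, u' < s ∧ s ≤ T ∧ 0 < kp s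
    · obtain ⟨s, h1, h2, h3⟩ := hex
      have hRnn : ∀ x ∈ Icc (0:ℝ) T, 0 ≤ kp x * R x := by
        intro x hx
        apply mul_nonneg (hkpnn x)
        apply intervalIntegral.integral_nonneg hx.1
        intro u hu
        exact hPnn u ⟨hu.1, le_trans hu.2 hx.2⟩
      exact helper_pos hcQf hT (le_trans hu'0 h1.le) h2 hRnn
        (mul_pos h3 (hRpos s h1 h2))
    · exfalso
      push_neg at hex
      have e : P u' + (∫ s in u'..T, kp s * f s) = P T :=
        integral_add_adjacent_intervals (hcPf.intervalIntegrable _ _)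
          (hcPf.intervalIntegrable _ _)
      have hzero2 : (∫ s in u'..T, kp s * f s) = 0 := by
        rw [intervalIntegral.integral_of_le hu'T'.le]
        rw [MeasureTheory.setIntegral_congr_fun measurableSet_Ioc
          (g := fun _ => (0:ℝ)) ?_]
        · simp
        · intro x hx
          have : kp x = 0 := le_antisymm (hex x hx.1 hx.2) (hkpnn x)
          simp [this]
      rw [hPu', hzero2] at e
      linarith
  -- positivity of deriv f given nonnegativity of f
  have hPOS : ∀ T, 0 < T → (∀ t ∈ Icc (0:ℝ) T, 0 ≤ f t) → 0 < deriv f T := by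
    intro T hT hfpos
    obtain ⟨hkey, hNT, hQT, _⟩ := hKEY T hT hfpos
    have hPnnT : 0 ≤ P T := by
      apply intervalIntegral.integral_nonneg hT.le
      intro x hx
      exact mul_nonneg (hkpnn x) (hfpos x hx)
    rcases eq_or_lt_of_le hPnnT with h0 | h0
    · rw [hd1 T hT.le, ← h0]; linarith
    · have hQ := hQposlem T hT hfpos h0
      have hA := hA1 T hT.le
      nlinarith
  -- deriv f is positive everywhere on [0, ∞)
  have hpos : ∀ t, 0 ≤ t → 0 < deriv f t := by
    by_contra hcon
    push_neg at hcon
    obtain ⟨t₀, ht₀, ht₀'⟩ := hcon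
    set S := {t : ℝ | 0 ≤ t ∧ deriv f t ≤ 0} with hSdef
    have hSne : S.Nonempty := ⟨t₀, ht₀, ht₀'⟩
    have hSc : IsClosed S := by
      have : S = Ici 0 ∩ (deriv f) ⁻¹' (Iic 0) := by
        ext x
        simp only [hSdef, mem_setOf_eq, mem_inter_iff, mem_Ici, mem_preimage, mem_Iic]
      rw [this]
      exact isClosed_Ici.inter (isClosed_Iic.preimage hcf')
    have hSbdd : BddBelow S := ⟨0, fun x hx => hx.1⟩
    set T := sInf S with hTdef
    have hTS : T ∈ S := hSc.csInf_mem hSne hSbdd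
    have hT0 : 0 < T := by
      rcases eq_or_lt_of_le hTS.1 with h | h
      · exfalso; rw [← h] at hTS; have h2 := hTS.2; rw [hf'0] at h2; linarith
      · exact h
    have hfpos' : ∀ t ∈ Icc (0:ℝ) T, 0 ≤ f t := by
      have hmono : StrictMonoOn f (Icc 0 T) := by
        apply strictMonoOn_of_deriv_pos (convex_Icc 0 T) hcf.continuousOn
        intro x hx
        rw [interior_Icc] at hx
        have hxS : x ∉ S := notMem_of_lt_csInf hx.2 hSbdd
        have : ¬ deriv f x ≤ 0 := fun h => hxS ⟨hx.1.le, h⟩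
        linarith [not_le.mp this]
      intro t ht
      rcases eq_or_lt_of_le ht.1 with h | h
      · rw [← h, hf0]
      · have := hmono ⟨le_rfl, hT0.le⟩ ht h
        rw [hf0] at this
        exact this.le
    exact absurd (hPOS T hT0 hfpos') (not_lt.mpr hTS.2)
  -- f is nonnegative (indeed increasing) on [0, ∞)
  have hfnn : ∀ t, 0 ≤ t → 0 ≤ f t := by
    intro t ht
    rcases eq_or_lt_of_le ht with h | h
    · rw [← h, hf0]
    · have hmono : StrictMonoOn f (Icc 0 t) := by
        apply strictMonoOn_of_deriv_pos (convex_Icc 0 t) hcf.continuousOn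
        intro x hx
        rw [interior_Icc] at hx
        exact hpos x hx.1.le
      have := hmono ⟨le_rfl, h.le⟩ ⟨h.le, le_rfl⟩ h
      rw [hf0] at this
      exact this.le
  -- global sign/monotonicity facts
  have hPnnG : ∀ u, 0 ≤ u → 0 ≤ P u := by
    intro u hu
    exact intervalIntegral.integral_nonneg hu
      (fun x hx => mul_nonneg (hkpnn x) (hfnn x hx.1))
  have hNnnG : ∀ u, 0 ≤ u → 0 ≤ N u := by
    intro u hu
    exact intervalIntegral.integral_nonneg hu
      (fun x hx => mul_nonneg (hkmnn x) (hfnn x hx.1))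
  have hNmonoG : ∀ u t, 0 ≤ u → u ≤ t → N u ≤ N t := by
    intro u t hu hut
    have e : N u + (∫ s in u..t, km s * f s) = N t :=
      integral_add_adjacent_intervals (hcNf.intervalIntegrable _ _)
        (hcNf.intervalIntegrable _ _)
    have : 0 ≤ ∫ s in u..t, km s * f s :=
      intervalIntegral.integral_nonneg hut
        (fun x hx => mul_nonneg (hkmnn x) (hfnn x (le_trans hu hx.1)))
    linarith
  have hQmonoG : ∀ u t, 0 ≤ u → u ≤ t → Q u ≤ Q t := by
    intro u t hu hut
    have e : Q u + (∫ s in u..t, kp s * R s) = Q t :=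
      integral_add_adjacent_intervals (hcQf.intervalIntegrable _ _)
        (hcQf.intervalIntegrable _ _)
    have : 0 ≤ ∫ s in u..t, kp s * R s := by
      apply intervalIntegral.integral_nonneg hut
      intro x hx
      apply mul_nonneg (hkpnn x)
      exact intervalIntegral.integral_nonneg (le_trans hu hx.1)
        (fun v hv => hPnnG v hv.1)
    linarith
  have hft : ∀ t, 0 ≤ t → f t ≤ t * (1 + N t) := by
    intro t ht
    have hmono : (∫ u in (0:ℝ)..t, deriv f u) ≤ ∫ u in (0:ℝ)..t, (1 + N t) := by
      apply intervalIntegral.integral_mono_on ht (hcf'.intervalIntegrable _ _)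
        intervalIntegrable_const
      intro u hu
      rw [hd1 u hu.1]
      have := hNmonoG u t hu.1 hu.2
      have := hPnnG u hu.1
      linarith
    rw [hfInt t]
    rw [intervalIntegral.integral_const] at hmono
    simp only [sub_zero, smul_eq_mul] at hmono
    linarith
  -- Gronwall-type upper bound
  set E : ℝ → ℝ := fun t => ∫ s in (0:ℝ)..t, s * km s with hEdef
  have hcEf : Continuous fun s : ℝ => s * km s := continuous_id.mul hckm
  have hEd : ∀ t, HasDerivAt E (t * km t) t := fun t =>
    (hcEf.integral_hasStrictDerivAt 0 t).hasDerivAt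
  set B' := ∫ s in Ioi (0:ℝ), s * km s with hBdef
  have hEB : ∀ t, 0 ≤ t → E t ≤ B' := by
    intro t ht
    have h1 : E t = ∫ s in Ioc (0:ℝ) t, s * km s := intervalIntegral.integral_of_le ht
    have h2 : (∫ s in Ioc (0:ℝ) t, s * km s) ≤ ∫ s in Ioi (0:ℝ), s * km s := by
      apply setIntegral_mono_set hintM
      · filter_upwards [self_mem_ae_restrict measurableSet_Ioi] with x hx
        exact mul_nonneg (le_of_lt hx) (hkmnn x)
      · exact HasSubset.Subset.eventuallyLE Ioc_subset_Ioi_self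
    linarith
  have hB0 : 0 ≤ B' :=
    setIntegral_nonneg measurableSet_Ioi fun x hx => mul_nonneg (le_of_lt hx) (hkmnn x)
  set μ₁ := Real.exp B' with hμ₁def
  have hμ₁1 : 1 ≤ μ₁ := by
    have := Real.exp_le_exp.mpr hB0
    rwa [Real.exp_zero] at this
  set φ : ℝ → ℝ := fun t => (1 + N t) * Real.exp (-E t) with hφdef
  have hφd : ∀ t, HasDerivAt φ
      ((km t * f t) * Real.exp (-E t) + (1 + N t) * (Real.exp (-E t) * -(t * km t))) t :=
    fun t => ((hNd t).const_add 1).mul ((hEd t).neg.exp)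
  have hφanti : AntitoneOn φ (Ici 0) := by
    apply antitoneOn_of_deriv_nonpos (convex_Ici 0)
    · exact fun t _ => (hφd t).continuousAt.continuousWithinAt
    · exact fun x _ => ((hφd x).differentiableAt).differentiableWithinAt
    · intro x hx
      rw [interior_Ici] at hx
      rw [(hφd x).deriv]
      have hfx := hft x hx.le
      have hexp := Real.exp_pos (-E x)
      have hkm0 := hkmnn x
      have hNx := hNnnG x hx.le
      have hmul : km x * f x ≤ km x * (x * (1 + N x)) :=
        mul_le_mul_of_nonneg_left hfx hkm0
      nlinarith
  have hNB : ∀ t, 0 ≤ t → 1 + N t ≤ μ₁ := by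
    intro t ht
    have h1 : φ t ≤ φ 0 := hφanti (self_mem_Ici) ht ht
    have hφ0 : φ 0 = 1 := by
      simp [hφdef, hNdef, hEdef, intervalIntegral.integral_same]
    rw [hφ0] at h1
    simp only [hφdef] at h1
    rw [Real.exp_neg] at h1
    have hp : 0 < Real.exp (E t) := Real.exp_pos _
    have h2 := mul_le_mul_of_nonneg_right h1 hp.le
    rw [mul_assoc, inv_mul_cancel₀ hp.ne', mul_one, one_mul] at h2
    have h3 : Real.exp (E t) ≤ μ₁ := Real.exp_le_exp.mpr (hEB t ht)
    linarith
  have hf'ub : ∀ t, 0 ≤ t → deriv f t ≤ μ₁ := by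
    intro t ht
    rw [hd1 t ht]
    have := hPnnG t ht
    have := hNB t ht
    linarith
  have hfub : ∀ t, 0 ≤ t → f t ≤ μ₁ * t := by
    intro t ht
    rw [hfInt t]
    have : (∫ u in (0:ℝ)..t, deriv f u) ≤ ∫ _u in (0:ℝ)..t, μ₁ :=
      intervalIntegral.integral_mono_on ht (hcf'.intervalIntegrable _ _)
        intervalIntegrable_const (fun u hu => hf'ub u hu.1)
    rw [intervalIntegral.integral_const] at this
    simp only [sub_zero, smul_eq_mul] at this
    linarith
  -- total positive-part integral
  set Pinf := ∫ s in Ioi (0:ℝ), kp s * f s with hPinfdef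
  have hPintOn : IntegrableOn (fun s => kp s * f s) (Ioi 0) volume := by
    apply Integrable.mono' (hintP.const_mul μ₁)
      (hcPf.aestronglyMeasurable.restrict)
    filter_upwards [self_mem_ae_restrict measurableSet_Ioi] with x hx
    have hx0 : (0:ℝ) < x := hx
    rw [Real.norm_eq_abs, abs_of_nonneg (mul_nonneg (hkpnn x) (hfnn x hx0.le))]
    have : f x ≤ μ₁ * x := hfub x hx0.le
    nlinarith [hkpnn x]
  have hPle : ∀ t, 0 ≤ t → P t ≤ Pinf := by
    intro t ht
    have h1 : P t = ∫ s in Ioc (0:ℝ) t, kp s * f s := intervalIntegral.integral_of_le ht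
    have h2 : (∫ s in Ioc (0:ℝ) t, kp s * f s) ≤ Pinf := by
      apply setIntegral_mono_set hPintOn
      · filter_upwards [self_mem_ae_restrict measurableSet_Ioi] with x hx
        exact mul_nonneg (hkpnn x) (hfnn x (le_of_lt hx))
      · exact HasSubset.Subset.eventuallyLE Ioc_subset_Ioi_self
    linarith
  have hPinf0 : 0 ≤ Pinf :=
    setIntegral_nonneg measurableSet_Ioi fun x hx => mul_nonneg (hkpnn x) (hfnn x (le_of_lt hx))
  rcases eq_or_lt_of_le hPinf0 with hP0 | hP0
  · -- Pinf = 0 : deriv f ≥ 1 everywhere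
    have hPz : ∀ u, 0 ≤ u → P u = 0 := fun u hu =>
      le_antisymm (by have := hPle u hu; rw [← hP0] at this; exact this) (hPnnG u hu)
    have hone : ∀ u, 0 ≤ u → 1 ≤ deriv f u := by
      intro u hu
      rw [hd1 u hu, hPz u hu]
      have := hNnnG u hu
      linarith
    refine ⟨1, μ₁, one_pos, hμ₁1, ?_⟩
    intro ρ hρ
    refine ⟨⟨hone ρ hρ, hf'ub ρ hρ⟩, ?_, hfub ρ hρ⟩
    rw [hfInt ρ]
    have : (∫ _u in (0:ℝ)..ρ, (1:ℝ)) ≤ ∫ u in (0:ℝ)..ρ, deriv f u :=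
      intervalIntegral.integral_mono_on hρ intervalIntegrable_const
        (hcf'.intervalIntegrable _ _) (fun u hu => hone u hu.1)
    rw [intervalIntegral.integral_const] at this
    simp only [sub_zero, smul_eq_mul] at this
    linarith
  · -- Pinf > 0
    have hs₁ : ∃ s₁, 0 < s₁ ∧ 0 < kp s₁ * f s₁ := by
      by_contra hno
      push_neg at hno
      have : Pinf ≤ 0 := setIntegral_nonpos measurableSet_Ioi fun x hx => hno x hx
      linarith
    obtain ⟨s₁, hs₁0, hs₁p⟩ := hs₁
    set t₁ := s₁ + 1 with ht₁def
    have ht₁ : 0 < t₁ := by linarith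
    have hPt₁ : 0 < P t₁ :=
      helper_pos hcPf ht₁ hs₁0.le (by simp only [ht₁def]; linarith)
        (fun x hx => mul_nonneg (hkpnn x) (hfnn x hx.1)) hs₁p
    have hδ : 0 < Q t₁ := hQposlem t₁ ht₁ (fun t ht => hfnn t ht.1) hPt₁
    obtain ⟨x₀, hx₀mem, hx₀min⟩ := (isCompact_Icc (a := (0:ℝ)) (b := t₁)).exists_isMinOn
      ⟨0, le_rfl, ht₁.le⟩ hcf'.continuousOn
    have hm0 : 0 < deriv f x₀ := hpos x₀ hx₀mem.1
    set μ₀ := min (deriv f x₀) (Q t₁) with hμ₀def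
    have hμ₀pos : 0 < μ₀ := lt_min hm0 hδ
    have hμ₀1 : μ₀ ≤ 1 := by
      have h1 : deriv f x₀ ≤ deriv f 0 := isMinOn_iff.mp hx₀min 0 ⟨le_rfl, ht₁.le⟩
      rw [hf'0] at h1
      exact le_trans (min_le_left _ _) h1
    have hlow : ∀ u, 0 ≤ u → μ₀ ≤ deriv f u := by
      intro u hu
      rcases le_total u t₁ with h | h
      · exact le_trans (min_le_left _ _) (isMinOn_iff.mp hx₀min u ⟨hu, h⟩)
      · have hu0 : 0 < u := lt_of_lt_of_le ht₁ h
        obtain ⟨hkey, hNu, hQu, _⟩ := hKEY u hu0 (fun t ht => hfnn t ht.1)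
        have hA := hA1 u hu0.le
        have hQm : Q t₁ ≤ Q u := hQmonoG t₁ u ht₁.le h
        have hQd : Q u ≤ deriv f u := by nlinarith
        exact le_trans (min_le_right _ _) (le_trans hQm hQd)
    refine ⟨μ₀, μ₁, hμ₀pos, le_trans hμ₀1 hμ₁1, ?_⟩
    intro ρ hρ
    refine ⟨⟨hlow ρ hρ, hf'ub ρ hρ⟩, ?_, hfub ρ hρ⟩
    rw [hfInt ρ]
    have : (∫ _u in (0:ℝ)..ρ, μ₀) ≤ ∫ u in (0:ℝ)..ρ, deriv f u :=
      intervalIntegral.integral_mono_on hρ intervalIntegrable_const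
        (hcf'.intervalIntegrable _ _) (fun u hu => hlow u hu.1)
    rw [intervalIntegral.integral_const] at this
    simp only [sub_zero, smul_eq_mul] at this
    linarith
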